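/- As λ → 0⁺ (with b > 0, n ≥ 1 fixed), the variance expression e^{−bλ}(1 − (2n+1)(e^{−nbλ} − e^{−(n+1)bλ}) − e^{−(2n+1)bλ})/(1 − e^{−bλ})² tends to 0. -/

import Mathlib

open Real Filter Topology

lemma lemGeom (x : ℝ) (m : ℕ) :
    (1 - x) * ∑ j ∈ Finset.range m, x ^ j = 1 - x ^ m := by
  have h := geom_sum_mul x m
  linear_combination -h

lemma lemA (n : ℕ) (x : ℝ) :
    (1 - x) * ∑ j ∈ Finset.range n, ((j : ℝ) + 1) * x ^ j
      = (∑ j ∈ Finset.range n, x ^ j) - n * x ^ n := by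
  induction n with
  | zero => simp
  | succ n ih =>
    rw [Finset.sum_range_succ, Finset.sum_range_succ (f := fun j => x ^ j), mul_add, ih]
    push_cast
    ring

lemma lemB (n : ℕ) (x : ℝ) :
    (1 - x) * ∑ j ∈ Finset.range n, ((n : ℝ) - j) * x ^ j
      = n - ∑ j ∈ Finset.range n, x ^ (j + 1) := by
  induction n with
  | zero => simp
  | succ n ih =>
    have h1 : ∑ j ∈ Finset.range (n + 1), (((n : ℝ) + 1) - j) * x ^ j
        = (∑ j ∈ Finset.range n, ((n : ℝ) - j) * x ^ j)
          + ∑ j ∈ Finset.range (n + 1), x ^ j := by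
      have : ∀ j ∈ Finset.range (n + 1), (((n : ℝ) + 1) - j) * x ^ j
          = ((n : ℝ) - j) * x ^ j + x ^ j := by intro j _; ring
      rw [Finset.sum_congr rfl this, Finset.sum_add_distrib,
        Finset.sum_range_succ (f := fun j => ((n : ℝ) - j) * x ^ j)]
      simp
    push_cast
    rw [h1, mul_add, ih, lemGeom, Finset.sum_range_succ]
    push_cast
    ring

lemma lemC (n : ℕ) :
    ∑ j ∈ Finset.range n, ((n : ℝ) - j) = ∑ j ∈ Finset.range n, ((j : ℝ) + 1) := by
  induction n with
  | zero => simp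
  | succ n ih =>
    have h1 : ∑ j ∈ Finset.range (n + 1), (((n : ℝ) + 1) - j)
        = (∑ j ∈ Finset.range n, ((n : ℝ) - j)) + ∑ j ∈ Finset.range (n + 1), (1 : ℝ) := by
      have : ∀ j ∈ Finset.range (n + 1), (((n : ℝ) + 1) - j)
          = ((n : ℝ) - j) + 1 := by intro j _; ring
      rw [Finset.sum_congr rfl this, Finset.sum_add_distrib,
        Finset.sum_range_succ (f := fun j => ((n : ℝ) - j))]
      simp
    push_cast
    rw [h1, ih, Finset.sum_range_succ (f := fun j => ((j : ℝ) + 1))]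
    simp only [Finset.sum_const, Finset.card_range, nsmul_eq_mul, mul_one]
    push_cast
    ring

lemma keyId (n : ℕ) (x : ℝ) :
    1 - (2 * (n : ℝ) + 1) * (x ^ n - x ^ (n + 1)) - x ^ (2 * n + 1)
      = (1 - x) ^ 2 * ((∑ j ∈ Finset.range n, ((j : ℝ) + 1) * x ^ j)
          - x ^ n * ∑ j ∈ Finset.range n, ((n : ℝ) - j) * x ^ j) := by
  have hA := lemA n x
  have hB := lemB n x
  have hG := lemGeom x n
  have hS : ∑ j ∈ Finset.range n, x ^ (j + 1) = x * ∑ j ∈ Finset.range n, x ^ j := by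
    rw [Finset.mul_sum]; exact Finset.sum_congr rfl fun j _ => by ring
  linear_combination (x - 1) * hA + (1 - x) * x ^ n * hB - x ^ n * (1 - x) * hS
    - (1 + x * x ^ n) * hG

/-- As `λ → 0⁺`, the conditional variance expression
`e^{-bλ}(1 - (2n+1)(e^{-nbλ} - e^{-(n+1)bλ}) - e^{-(2n+1)bλ})/(1-e^{-bλ})²` tends to `0`. -/
theorem stmt9 (b : ℝ) (n : ℕ) (hb : 0 < b) (hn : 1 ≤ n) :
    Tendsto (fun l : ℝ => exp (-b * l) * (1 - (2 * (n : ℝ) + 1) *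
        (exp (-(n : ℝ) * b * l) - exp (-((n : ℝ) + 1) * b * l))
        - exp (-(2 * (n : ℝ) + 1) * b * l)) / (1 - exp (-b * l)) ^ 2)
      (𝓝[>] 0) (𝓝 0) := by
  set φ : ℝ → ℝ := fun x => x * ((∑ j ∈ Finset.range n, ((j : ℝ) + 1) * x ^ j)
      - x ^ n * ∑ j ∈ Finset.range n, ((n : ℝ) - j) * x ^ j) with hφdef
  have hφ : Continuous φ := by
    apply continuous_id.mul
    apply Continuous.sub
    · exact continuous_finset_sum _ fun j _ => continuous_const.mul (continuous_pow j)
    · exact (continuous_pow n).mul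
        (continuous_finset_sum _ fun j _ => continuous_const.mul (continuous_pow j))
  have hexp : Tendsto (fun l : ℝ => exp (-b * l)) (𝓝[>] (0 : ℝ)) (𝓝 1) := by
    have hc : Continuous fun l : ℝ => exp (-b * l) := by fun_prop
    have h0 := (hc.continuousAt (x := 0)).tendsto
    simp only [mul_zero, Real.exp_zero] at h0
    exact h0.mono_left nhdsWithin_le_nhds
  have hval : φ 1 = 0 := by
    simp only [hφdef, one_pow, mul_one, one_mul]
    rw [lemC]
    ring
  have hmain : Tendsto (fun l : ℝ => φ (exp (-b * l))) (𝓝[>] (0 : ℝ)) (𝓝 0) := by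
    have := (hφ.continuousAt (x := 1)).tendsto.comp hexp
    rwa [hval] at this
  apply hmain.congr'
  filter_upwards [self_mem_nhdsWithin] with l hl
  have hl' : (0 : ℝ) < l := hl
  set x := exp (-b * l) with hxdef
  have hx1 : x < 1 := by
    rw [hxdef, Real.exp_lt_one_iff]
    nlinarith
  have hne : (1 - x) ^ 2 ≠ 0 := pow_ne_zero _ (by linarith)
  have e1 : exp (-(n : ℝ) * b * l) = x ^ n := by
    rw [hxdef, ← Real.exp_nat_mul]
    ring_nf
  have e2 : exp (-((n : ℝ) + 1) * b * l) = x ^ (n + 1) := by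
    rw [hxdef, ← Real.exp_nat_mul]
    push_cast
    ring_nf
  have e3 : exp (-(2 * (n : ℝ) + 1) * b * l) = x ^ (2 * n + 1) := by
    rw [hxdef, ← Real.exp_nat_mul]
    push_cast
    ring_nf
  show φ x = x * (1 - (2 * (n : ℝ) + 1) * (exp (-(n : ℝ) * b * l)
      - exp (-((n : ℝ) + 1) * b * l)) - exp (-(2 * (n : ℝ) + 1) * b * l)) / (1 - x) ^ 2
  rw [e1, e2, e3, keyId, hφdef]
  rw [mul_div_assoc, mul_div_cancel_left₀ _ hne]
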